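/- For every α > 0 and θ > 2, there exists a square-summable coefficient array that satisfies the condition A^α_θ but does not satisfy the condition B^{α/(1+2α)}_{2,∞}. Consequently the class A^α_θ is not contained in the intersection of the classes B^{α/(1+2α)}_{2,∞} and W_{2/(1+2α)}. -/

import Mathlib

open scoped BigOperators

/-- A coefficient array `β` is square-summable if `Σ_{j,k} β_{j,k}² < ∞`. -/
def SqSummable (β : ℕ → ℕ → ℝ) : Prop :=
  Summable fun j : ℕ => ∑ k ∈ Finset.range (2 ^ j), (β j k) ^ 2

/-- The condition `B^{α/(1+2α)}_{2,∞}`. -/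
def CondB2 (β : ℕ → ℕ → ℝ) (α : ℝ) : Prop :=
  ∃ C : ℝ, ∀ J : ℕ,
    (2 : ℝ) ^ (2 * (J : ℝ) * α / (1 + 2 * α)) *
      ∑' j : ℕ, (if J ≤ j then ∑ k ∈ Finset.range (2 ^ j), (β j k) ^ 2 else 0) ≤ C

/-- The weak Besov condition `W_{2/(1+2α)}`. -/
def CondW (β : ℕ → ℕ → ℝ) (α : ℝ) : Prop :=
  ∃ C : ℝ, ∀ u : ℝ, 0 < u →
    {q : ℕ × ℕ | q.2 < 2 ^ q.1 ∧ u < |β q.1 q.2|}.Finite ∧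
      u ^ (2 / (1 + 2 * α)) *
        ({q : ℕ × ℕ | q.2 < 2 ^ q.1 ∧ u < |β q.1 q.2|}.ncard : ℝ) ≤ C

/-- `N(J,j) = min(⌊2^J (j−J+1)^{−θ}⌋, 2^j)`. -/
noncomputable def NJj (θ : ℝ) (J j : ℕ) : ℕ :=
  min ⌊(2 : ℝ) ^ J * ((j : ℝ) - (J : ℝ) + 1) ^ (-θ)⌋₊ (2 ^ j)

/-- `t_{j,J}(β)`: the minimum over subsets `A` of `{0,…,2^j−1}` of cardinality `N(J,j)`
of `Σ_{k ∉ A} β_{j,k}²`, i.e. the sum of squares of all but the `N(J,j)` largest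
`|β_{j,k}|` at level `j`. -/
noncomputable def tTail (β : ℕ → ℕ → ℝ) (θ : ℝ) (J j : ℕ) : ℝ :=
  sInf {x : ℝ | ∃ A : Finset ℕ, A ⊆ Finset.range (2 ^ j) ∧ A.card = NJj θ J j ∧
    x = ∑ k ∈ Finset.range (2 ^ j) \ A, (β j k) ^ 2}

/-- The condition `A^α_θ`. -/
def CondA (β : ℕ → ℕ → ℝ) (α θ : ℝ) : Prop :=
  ∃ C : ℝ, ∀ J : ℕ,
    (2 : ℝ) ^ (2 * (J : ℝ) * α) *
      ∑' j : ℕ, (if J ≤ j then tTail β θ J j else 0) ≤ C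

/- ### Auxiliary lemmas -/

lemma aux17_geom_summable {r : ℝ} (h0 : 0 ≤ r) (h1 : r < 1) (M : ℕ) :
    Summable (fun j : ℕ => if M ≤ j then r ^ j else 0) := by
  apply Summable.of_nonneg_of_le (f := fun j : ℕ => r ^ j)
  · intro b; split
    · exact pow_nonneg h0 _
    · exact le_rfl
  · intro b; split
    · exact le_rfl
    · exact pow_nonneg h0 _
  · exact summable_geometric_of_lt_one h0 h1

lemma aux17_geom_tail {r : ℝ} (h0 : 0 ≤ r) (h1 : r < 1) (M : ℕ) :
    ∑' j : ℕ, (if M ≤ j then r ^ j else 0) = r ^ M * (1 - r)⁻¹ := by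
  have hs := aux17_geom_summable h0 h1 M
  have key := hs.sum_add_tsum_nat_add M
  have hz : ∑ i ∈ Finset.range M, (if M ≤ i then r ^ i else 0) = 0 := by
    apply Finset.sum_eq_zero; intro i hi
    rw [if_neg (Nat.not_le.2 (Finset.mem_range.1 hi))]
  rw [hz, zero_add] at key
  rw [← key]
  have hcongr : ∀ i : ℕ, (if M ≤ i + M then r ^ (i + M) else 0) = r ^ i * r ^ M := by
    intro i; rw [if_pos (Nat.le_add_left M i), pow_add]
  rw [tsum_congr hcongr, tsum_mul_right, tsum_geometric_of_lt_one h0 h1, mul_comm]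

lemma aux17_tTail_bddBelow (β : ℕ → ℕ → ℝ) (θ : ℝ) (J j : ℕ) :
    BddBelow {x : ℝ | ∃ A : Finset ℕ, A ⊆ Finset.range (2 ^ j) ∧ A.card = NJj θ J j ∧
      x = ∑ k ∈ Finset.range (2 ^ j) \ A, (β j k) ^ 2} := by
  refine ⟨0, fun x hx => ?_⟩
  obtain ⟨A, -, -, rfl⟩ := hx
  exact Finset.sum_nonneg fun k _ => sq_nonneg _

lemma aux17_exp_quad : ∀ y : ℝ, 0 ≤ y → y ^ 2 / 4 ≤ Real.exp y := by
  intro y hy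
  have h := Real.add_one_le_exp (y / 2)
  have h2 : (y / 2 + 1) * (y / 2 + 1) ≤ Real.exp (y / 2) * Real.exp (y / 2) :=
    mul_le_mul h h (by linarith) (Real.exp_pos _).le
  rw [← Real.exp_add] at h2
  have hyy : y / 2 + y / 2 = y := by ring
  rw [hyy] at h2
  nlinarith

/-- the non-embedding `A^α_θ ⊄ B^{α/(1+2α)}_{2,∞} ∩ W_{2/(1+2α)}`. -/
theorem stmt_17 (α θ : ℝ) (hα : 0 < α) (hθ : 2 < θ) :
    (∃ β : ℕ → ℕ → ℝ, SqSummable β ∧ CondA β α θ ∧ ¬ CondB2 β α) ∧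
      ¬ (∀ β : ℕ → ℕ → ℝ, SqSummable β → CondA β α θ → CondB2 β α ∧ CondW β α) := by
  have h2α : (0:ℝ) < 1 + 2 * α := by linarith
  have hθ0 : (0:ℝ) < θ := by linarith
  set c : ℝ := α / (1 + 2 * α) with hc
  have hcpos : 0 < c := div_pos hα h2α
  set r : ℝ := (2:ℝ) ^ (-c) with hr
  have hr0 : 0 < r := Real.rpow_pos_of_pos two_pos _
  have hr1 : r < 1 := Real.rpow_lt_one_of_one_lt_of_neg one_lt_two (neg_neg_of_pos hcpos)
  have h1r : 0 < 1 - r := by linarith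
  set β : ℕ → ℕ → ℝ := fun j k => if k = 0 then Real.sqrt (r ^ j) else 0 with hβ
  have hsq : ∀ j k : ℕ, β j k ^ 2 = if k = 0 then r ^ j else 0 := by
    intro j k
    simp only [hβ]
    split
    · exact Real.sq_sqrt (pow_nonneg hr0.le _)
    · ring
  have hpow2 : ∀ j : ℕ, (0:ℕ) < 2 ^ j := fun j => pow_pos (by norm_num) j
  have hlevel : ∀ j : ℕ, ∑ k ∈ Finset.range (2 ^ j), β j k ^ 2 = r ^ j := by
    intro j
    rw [Finset.sum_congr rfl (fun k _ => hsq j k),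
      Finset.sum_ite_eq' (Finset.range (2 ^ j)) 0 (fun _ => r ^ j),
      if_pos (Finset.mem_range.2 (hpow2 j))]
  -- square summability
  have hss : SqSummable β := by
    unfold SqSummable
    have heq : (fun j : ℕ => ∑ k ∈ Finset.range (2 ^ j), β j k ^ 2) = fun j : ℕ => r ^ j :=
      funext hlevel
    rw [heq]
    exact summable_geometric_of_lt_one hr0.le hr1
  -- tTail upper bounds
  have htt_le_sum : ∀ J j : ℕ, tTail β θ J j ≤ r ^ j := by
    intro J j
    obtain ⟨A, hAsub, hAcard⟩ := Finset.exists_subset_card_eq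
      (s := Finset.range (2 ^ j)) (n := NJj θ J j)
      (by rw [Finset.card_range]; exact min_le_right _ _)
    have hmem : (∑ k ∈ Finset.range (2 ^ j) \ A, β j k ^ 2) ∈
        {x : ℝ | ∃ A : Finset ℕ, A ⊆ Finset.range (2 ^ j) ∧ A.card = NJj θ J j ∧
          x = ∑ k ∈ Finset.range (2 ^ j) \ A, (β j k) ^ 2} := ⟨A, hAsub, hAcard, rfl⟩
    refine le_trans (csInf_le (aux17_tTail_bddBelow β θ J j) hmem) ?_
    rw [← hlevel j]
    exact Finset.sum_le_sum_of_subset_of_nonneg (Finset.sdiff_subset)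
      (fun k _ _ => sq_nonneg _)
  have htt_nonneg : ∀ J j : ℕ, 0 ≤ tTail β θ J j := by
    intro J j
    unfold tTail
    apply Real.sInf_nonneg
    rintro x ⟨A, -, -, rfl⟩
    exact Finset.sum_nonneg fun k _ => sq_nonneg _
  have htt_le_zero : ∀ J j : ℕ, 1 ≤ NJj θ J j → tTail β θ J j ≤ 0 := by
    intro J j hN
    have hN2 : NJj θ J j ≤ 2 ^ j := min_le_right _ _
    obtain ⟨A', hA'sub, hA'card⟩ := Finset.exists_subset_card_eq
      (s := (Finset.range (2 ^ j)).erase 0) (n := NJj θ J j - 1)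
      (by rw [Finset.card_erase_of_mem (Finset.mem_range.2 (hpow2 j)), Finset.card_range]; omega)
    have h0A' : 0 ∉ A' := fun h => (Finset.mem_erase.1 (hA'sub h)).1 rfl
    have hAsub : insert 0 A' ⊆ Finset.range (2 ^ j) := by
      intro x hx
      rcases Finset.mem_insert.1 hx with h | h
      · subst h; exact Finset.mem_range.2 (hpow2 j)
      · exact Finset.mem_of_mem_erase (hA'sub h)
    have hAcard : (insert 0 A').card = NJj θ J j := by
      rw [Finset.card_insert_of_notMem h0A', hA'card]; omega
    have hmem : (0:ℝ) ∈ {x : ℝ | ∃ A : Finset ℕ, A ⊆ Finset.range (2 ^ j) ∧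
        A.card = NJj θ J j ∧ x = ∑ k ∈ Finset.range (2 ^ j) \ A, (β j k) ^ 2} := by
      refine ⟨insert 0 A', hAsub, hAcard, ?_⟩
      symm
      apply Finset.sum_eq_zero
      intro k hk
      have hk0 : k ≠ 0 := by
        intro h; subst h
        exact (Finset.mem_sdiff.1 hk).2 (Finset.mem_insert_self 0 A')
      rw [hsq, if_neg hk0]
    exact csInf_le (aux17_tTail_bddBelow β θ J j) hmem
  -- positivity of N(J,j) below the cutoff
  have hNpos : ∀ J j : ℕ, J ≤ j → ((j:ℝ) - J + 1 < (2:ℝ) ^ ((J:ℝ)/θ)) → 1 ≤ NJj θ J j := by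
    intro J j hJj hlt
    have hJle : (J:ℝ) ≤ j := Nat.cast_le.2 hJj
    have hm : (0:ℝ) < (j:ℝ) - J + 1 := by linarith
    have hpowlt : ((j:ℝ) - J + 1) ^ θ < (2:ℝ) ^ (J:ℝ) := by
      calc ((j:ℝ) - J + 1) ^ θ < ((2:ℝ) ^ ((J:ℝ)/θ)) ^ θ :=
            Real.rpow_lt_rpow hm.le hlt hθ0
        _ = (2:ℝ) ^ (J:ℝ) := by
            rw [← Real.rpow_mul (by norm_num : (0:ℝ) ≤ 2)]
            congr 1
            field_simp
    have hmθ : (0:ℝ) < ((j:ℝ) - J + 1) ^ θ := Real.rpow_pos_of_pos hm θ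
    have hle : ((j:ℝ) - J + 1) ^ θ ≤ (2:ℝ) ^ J := by
      rw [← Real.rpow_natCast 2 J]; exact hpowlt.le
    have h1 : (1:ℝ) ≤ (2:ℝ) ^ J * ((j:ℝ) - J + 1) ^ (-θ) := by
      rw [Real.rpow_neg hm.le]
      have hmul := mul_le_mul_of_nonneg_right hle (inv_nonneg.2 hmθ.le)
      rwa [mul_inv_cancel₀ hmθ.ne'] at hmul
    refine le_min (Nat.le_floor ?_) (hpow2 j)
    exact_mod_cast h1
  -- the condition A
  have hbne : Real.log 2 ≠ 0 := ne_of_gt (Real.log_pos one_lt_two)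
  set b : ℝ := (Real.log 2 / θ) ^ 2 / 4 with hb
  have hbpos : 0 < b := by positivity
  set D : ℝ := (2 * α) ^ 2 / (4 * (c * b)) + c with hD
  have hA : CondA β α θ := by
    refine ⟨(2:ℝ) ^ D * (1 - r)⁻¹, ?_⟩
    intro J
    set n : ℕ := ⌈(2:ℝ) ^ ((J:ℝ)/θ)⌉₊ with hn
    have hx0 : (0:ℝ) < (2:ℝ) ^ ((J:ℝ)/θ) := Real.rpow_pos_of_pos two_pos _
    have hn1 : 1 ≤ n := by
      rw [hn, Nat.one_le_ceil_iff]; exact hx0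
    set M : ℕ := J + n - 1 with hM
    have hpt : ∀ j : ℕ, (if J ≤ j then tTail β θ J j else 0) ≤ (if M ≤ j then r ^ j else 0) := by
      intro j
      by_cases hJj : J ≤ j
      · rw [if_pos hJj]
        by_cases hMj : M ≤ j
        · rw [if_pos hMj]; exact htt_le_sum J j
        · rw [if_neg hMj]
          apply htt_le_zero
          apply hNpos J j hJj
          push_neg at hMj
          have hceil : (n:ℝ) < (2:ℝ) ^ ((J:ℝ)/θ) + 1 := by
            rw [hn]; exact Nat.ceil_lt_add_one hx0.le
          have hjn : j + 2 ≤ J + n := by omega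
          have hjn' : (j:ℝ) + 2 ≤ (J:ℝ) + n := by exact_mod_cast hjn
          linarith
      · rw [if_neg hJj]
        split
        · exact (pow_pos hr0 _).le
        · exact le_rfl
    have hsumh := aux17_geom_summable hr0.le hr1 M
    have hsumg : Summable (fun j : ℕ => if J ≤ j then tTail β θ J j else 0) := by
      apply Summable.of_nonneg_of_le (f := fun j : ℕ => if M ≤ j then r ^ j else 0) _ hpt hsumh
      intro j; split
      · exact htt_nonneg J j
      · exact le_rfl
    have hle : ∑' j : ℕ, (if J ≤ j then tTail β θ J j else 0) ≤ r ^ M * (1 - r)⁻¹ := by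
      rw [← aux17_geom_tail hr0.le hr1 M]
      exact Summable.tsum_le_tsum hpt hsumg hsumh
    have hMre : (2:ℝ) ^ ((J:ℝ)/θ) - 1 ≤ (M:ℝ) := by
      have h1 : (2:ℝ) ^ ((J:ℝ)/θ) ≤ (n:ℝ) := by rw [hn]; exact Nat.le_ceil _
      have h2 : n ≤ M + 1 := by omega
      have h2' : (n:ℝ) ≤ (M:ℝ) + 1 := by exact_mod_cast h2
      linarith
    have hquad : 2 * (J:ℝ) * α + (-c) * (M:ℝ) ≤ D := by
      have he := aux17_exp_quad (Real.log 2 * ((J:ℝ)/θ)) (by positivity)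
      have heq : (2:ℝ) ^ ((J:ℝ)/θ) = Real.exp (Real.log 2 * ((J:ℝ)/θ)) :=
        Real.rpow_def_of_pos two_pos _
      rw [← heq] at he
      have hb' : (Real.log 2 * ((J:ℝ)/θ)) ^ 2 / 4 = b * (J:ℝ) ^ 2 := by
        rw [hb]; field_simp
      rw [hb'] at he
      have hcb : 0 < c * b := mul_pos hcpos hbpos
      have hq : 2 * (J:ℝ) * α - c * b * (J:ℝ) ^ 2 ≤ (2 * α) ^ 2 / (4 * (c * b)) := by
        rw [le_div_iff₀ (by positivity)]
        nlinarith [sq_nonneg (2 * (c * b) * (J:ℝ) - 2 * α)]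
      have he' : c * (b * (J:ℝ) ^ 2) ≤ c * (2:ℝ) ^ ((J:ℝ)/θ) :=
        mul_le_mul_of_nonneg_left he hcpos.le
      have hM' : c * ((2:ℝ) ^ ((J:ℝ)/θ) - 1) ≤ c * (M:ℝ) :=
        mul_le_mul_of_nonneg_left hMre hcpos.le
      rw [hD]
      nlinarith
    calc (2:ℝ) ^ (2 * (J:ℝ) * α) * ∑' j : ℕ, (if J ≤ j then tTail β θ J j else 0)
        ≤ (2:ℝ) ^ (2 * (J:ℝ) * α) * (r ^ M * (1 - r)⁻¹) :=
          mul_le_mul_of_nonneg_left hle (Real.rpow_nonneg (by norm_num) _)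
      _ = ((2:ℝ) ^ (2 * (J:ℝ) * α) * r ^ M) * (1 - r)⁻¹ := by ring
      _ = (2:ℝ) ^ (2 * (J:ℝ) * α + (-c) * (M:ℝ)) * (1 - r)⁻¹ := by
          rw [hr, ← Real.rpow_natCast ((2:ℝ) ^ (-c)) M,
            ← Real.rpow_mul (by norm_num : (0:ℝ) ≤ 2),
            ← Real.rpow_add (by norm_num : (0:ℝ) < 2)]
      _ ≤ (2:ℝ) ^ D * (1 - r)⁻¹ := by
          apply mul_le_mul_of_nonneg_right _ (inv_nonneg.2 h1r.le)
          exact Real.rpow_le_rpow_of_exponent_le one_le_two hquad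
  -- not CondB2
  have hnB : ¬ CondB2 β α := by
    rintro ⟨C, hC⟩
    have hT : ∀ J : ℕ, ∑' j : ℕ,
        (if J ≤ j then ∑ k ∈ Finset.range (2 ^ j), β j k ^ 2 else 0) = r ^ J * (1 - r)⁻¹ := by
      intro J
      rw [tsum_congr (fun j => by rw [hlevel j]), aux17_geom_tail hr0.le hr1 J]
    have h2c : (1:ℝ) < (2:ℝ) ^ c :=
      (Real.one_lt_rpow_iff_of_pos two_pos).2 (Or.inl ⟨one_lt_two, hcpos⟩)
    obtain ⟨J, hJ⟩ := pow_unbounded_of_one_lt (C * (1 - r)) h2c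
    have hCJ := hC J
    rw [hT J] at hCJ
    have key : (2:ℝ) ^ (2 * (J:ℝ) * α / (1 + 2 * α)) * r ^ J = ((2:ℝ) ^ c) ^ J := by
      rw [hr, ← Real.rpow_natCast ((2:ℝ) ^ (-c)) J,
        ← Real.rpow_mul (by norm_num : (0:ℝ) ≤ 2),
        ← Real.rpow_add (by norm_num : (0:ℝ) < 2),
        ← Real.rpow_natCast ((2:ℝ) ^ c) J,
        ← Real.rpow_mul (by norm_num : (0:ℝ) ≤ 2)]
      congr 1
      rw [hc]
      field_simp
      ring
    rw [← mul_assoc, key] at hCJ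
    have hfin : ((2:ℝ) ^ c) ^ J ≤ C * (1 - r) := by
      rw [← div_eq_mul_inv] at hCJ
      exact (div_le_iff₀ h1r).1 hCJ
    linarith
  refine ⟨⟨β, hss, hA, hnB⟩, ?_⟩
  intro hall
  exact hnB (hall β hss hA).1
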